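/- arXiv:1405.3950 — 5 statements merged into one kernel-verified Lean document; each statement's English description precedes it below -/
import Mathlib

section
/- Let C and D be convex bodies in ℝ². There exists a constant c > 0 (depending on C and D) such that for every n ≥ 1 there exist n positive homothets C₁,…,Cₙ of C, Cᵢ = vᵢ + μᵢ • C with μᵢ > 0, contained in D, with pairwise disjoint interiors, and with ∑ᵢ μᵢ ≥ c·√n. (This shows the √n upper bound of Proposition 1 is tight up to the constant factor.) -/
open MeasureTheory Metric Set

lemma coord_le_norm (x : EuclideanSpace ℝ (Fin 2)) (k : Fin 2) : |x k| ≤ ‖x‖ := by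
  have h := abs_real_inner_le_norm (EuclideanSpace.single k (1:ℝ)) x
  simpa [EuclideanSpace.inner_single_left, EuclideanSpace.norm_single] using h

set_option maxHeartbeats 1000000 in
/-- The `√n` bound is tight: there is `c > 0` (depending on `C` and `D`)
such that for every `n ≥ 1` there is a packing of `n` positive homothets of `C` in `D`
whose homothety factors sum to at least `c·√n`. -/
theorem exists_packing_sum_ge_sqrt
    (C D : Set (EuclideanSpace ℝ (Fin 2)))
    (hCconv : Convex ℝ C) (hCcpt : IsCompact C) (hCint : (interior C).Nonempty)
    (hDconv : Convex ℝ D) (hDcpt : IsCompact D) (hDint : (interior D).Nonempty) :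
    ∃ c : ℝ, 0 < c ∧ ∀ n : ℕ, 1 ≤ n →
      ∃ (v : Fin n → EuclideanSpace ℝ (Fin 2)) (μ : Fin n → ℝ),
        (∀ i, 0 < μ i) ∧
        (∀ i, (fun x => v i + μ i • x) '' C ⊆ D) ∧
        (∀ i j, i ≠ j →
          Disjoint (interior ((fun x => v i + μ i • x) '' C))
                   (interior ((fun x => v j + μ j • x) '' C))) ∧
        c * Real.sqrt n ≤ ∑ i, μ i := by
  obtain ⟨p, hp⟩ := hDint
  obtain ⟨r, hr, hrD⟩ := Metric.isOpen_iff.mp isOpen_interior p hp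
  have hball : Metric.ball p r ⊆ D := hrD.trans interior_subset
  obtain ⟨R₀, hR₀⟩ := hCcpt.isBounded.subset_closedBall 0
  set R := max R₀ 1 with hR
  have hR1 : (1:ℝ) ≤ R := le_max_right _ _
  have hRpos : (0:ℝ) < R := lt_of_lt_of_le one_pos hR1
  have hCR : C ⊆ Metric.closedBall 0 R :=
    hR₀.trans (Metric.closedBall_subset_closedBall (le_max_left _ _))
  refine ⟨r / (16 * R), by positivity, ?_⟩
  intro n hn
  set m := Nat.ceil (Real.sqrt n) with hm
  have hsq1 : (1:ℝ) ≤ Real.sqrt n := by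
    rw [show (1:ℝ) = Real.sqrt 1 by simp]
    exact Real.sqrt_le_sqrt (by exact_mod_cast hn)
  have hmle : Real.sqrt n ≤ m := Nat.le_ceil _
  have hm1 : 1 ≤ m := by
    have : (0:ℝ) < m := lt_of_lt_of_le one_pos (le_trans hsq1 hmle)
    exact_mod_cast Nat.succ_le_of_lt (by exact_mod_cast this)
  have hmpos : (0:ℝ) < m := by exact_mod_cast hm1
  have hmn : n ≤ m * m := by
    have hs2 : Real.sqrt n * Real.sqrt n = n := Real.mul_self_sqrt n.cast_nonneg
    have : (n:ℝ) ≤ (m:ℝ) * m := by nlinarith [Real.sqrt_nonneg (n:ℝ)]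
    exact_mod_cast this
  have hm2 : (m : ℝ) ≤ 2 * Real.sqrt n := by
    have := Nat.ceil_lt_add_one (Real.sqrt_nonneg (n:ℝ))
    rw [← hm] at this
    linarith
  set s := r / (2 * m) with hs
  have hspos : 0 < s := by positivity
  set μ0 := s / (4 * R) with hμ
  have hμ0 : 0 < μ0 := by positivity
  set f : Fin n → Fin m × Fin m := fun i => finProdFinEquiv.symm (Fin.castLE hmn i) with hf
  have hfinj : Function.Injective f :=
    finProdFinEquiv.symm.injective.comp (Fin.castLE_injective hmn)
  set e : Fin 2 → EuclideanSpace ℝ (Fin 2) := fun k => EuclideanSpace.single k (1:ℝ) with he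
  set v : Fin n → EuclideanSpace ℝ (Fin 2) :=
    fun i => p + (s * ((f i).1 : ℝ)) • e 0 + (s * ((f i).2 : ℝ)) • e 1 with hv
  -- distance from v i to p
  have hvp : ∀ i, dist (v i) p ≤ 2 * s * (m - 1) := by
    intro i
    have ha : ((f i).1 : ℝ) ≤ (m:ℝ) - 1 := by
      have := (f i).1.is_lt
      have : ((f i).1 : ℕ) + 1 ≤ m := this
      have := (Nat.cast_le (α := ℝ)).mpr this
      push_cast at this; linarith
    have hb : ((f i).2 : ℝ) ≤ (m:ℝ) - 1 := by
      have := (f i).2.is_lt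
      have : ((f i).2 : ℕ) + 1 ≤ m := this
      have := (Nat.cast_le (α := ℝ)).mpr this
      push_cast at this; linarith
    have ha0 : (0:ℝ) ≤ ((f i).1 : ℝ) := Nat.cast_nonneg _
    have hb0 : (0:ℝ) ≤ ((f i).2 : ℝ) := Nat.cast_nonneg _
    have : v i - p = (s * ((f i).1 : ℝ)) • e 0 + (s * ((f i).2 : ℝ)) • e 1 := by
      rw [hv]; simp only [add_assoc, add_sub_cancel_left]
    rw [dist_eq_norm, this]
    calc ‖(s * ((f i).1 : ℝ)) • e 0 + (s * ((f i).2 : ℝ)) • e 1‖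
        ≤ ‖(s * ((f i).1 : ℝ)) • e 0‖ + ‖(s * ((f i).2 : ℝ)) • e 1‖ := norm_add_le _ _
      _ = |s * ((f i).1 : ℝ)| * ‖e 0‖ + |s * ((f i).2 : ℝ)| * ‖e 1‖ := by
          rw [norm_smul, norm_smul, Real.norm_eq_abs, Real.norm_eq_abs]
      _ ≤ 2 * s * (m - 1) := by
          have he0 : ‖e 0‖ = 1 := by simp [he, EuclideanSpace.norm_single]
          have he1 : ‖e 1‖ = 1 := by simp [he, EuclideanSpace.norm_single]
          rw [he0, he1, abs_of_nonneg (by positivity), abs_of_nonneg (by positivity)]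
          nlinarith
  -- each homothet is contained in a small closed ball
  have himg : ∀ i, (fun x => v i + μ0 • x) '' C ⊆ Metric.closedBall (v i) (μ0 * R) := by
    intro i y hy
    obtain ⟨x, hx, rfl⟩ := hy
    have hxR : ‖x‖ ≤ R := by simpa using hCR hx
    simp only [Metric.mem_closedBall, dist_eq_norm]
    have : v i + μ0 • x - v i = μ0 • x := by abel
    rw [this, norm_smul, Real.norm_eq_abs, abs_of_pos hμ0]
    exact mul_le_mul_of_nonneg_left hxR hμ0.le
  refine ⟨v, fun _ => μ0, fun _ => hμ0, ?_, ?_, ?_⟩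
  · -- containment in D
    intro i y hy
    apply hball
    have h1 := himg i hy
    simp only [Metric.mem_closedBall] at h1
    simp only [Metric.mem_ball]
    have h2 := hvp i
    have h3 : dist y p ≤ dist y (v i) + dist (v i) p := dist_triangle _ _ _
    have hμR : μ0 * R = s / 4 := by rw [hμ]; field_simp; try ring
    have hsm : 2 * s * (m:ℝ) = r := by rw [hs]; field_simp
    nlinarith
  · -- disjointness
    intro i j hij
    have hfij : f i ≠ f j := fun h => hij (hfinj h)
    have hdist : s ≤ dist (v i) (v j) := by
      have hsub : v i - v j = (s * (((f i).1 : ℝ) - ((f j).1 : ℝ))) • e 0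
          + (s * (((f i).2 : ℝ) - ((f j).2 : ℝ))) • e 1 := by
        rw [hv]
        simp only [sub_smul, mul_sub]
        abel
      by_cases hc : (f i).1 = (f j).1
      · have hc2 : (f i).2 ≠ (f j).2 := by
          intro h2; exact hfij (Prod.ext hc h2)
        have hone : (1:ℝ) ≤ |((f i).2 : ℝ) - ((f j).2 : ℝ)| := by
          have hne : ((f i).2 : ℤ) ≠ ((f j).2 : ℤ) := by
            exact_mod_cast fun h => hc2 (Fin.ext (by exact_mod_cast h))
          have h1 : (1:ℤ) ≤ |((f i).2 : ℤ) - ((f j).2 : ℤ)| :=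
            Int.one_le_abs (sub_ne_zero.mpr hne)
          exact_mod_cast h1
        have hcoord : |(v i - v j) 1| = s * |((f i).2 : ℝ) - ((f j).2 : ℝ)| := by
          rw [hsub]
          simp [he, EuclideanSpace.single_apply, abs_mul, abs_of_pos hspos]
        calc s = s * 1 := (mul_one s).symm
          _ ≤ s * |((f i).2 : ℝ) - ((f j).2 : ℝ)| :=
              mul_le_mul_of_nonneg_left hone hspos.le
          _ = |(v i - v j) 1| := hcoord.symm
          _ ≤ ‖v i - v j‖ := coord_le_norm _ _
          _ = dist (v i) (v j) := (dist_eq_norm _ _).symm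
      · have hone : (1:ℝ) ≤ |((f i).1 : ℝ) - ((f j).1 : ℝ)| := by
          have hne : ((f i).1 : ℤ) ≠ ((f j).1 : ℤ) := by
            exact_mod_cast fun h => hc (Fin.ext (by exact_mod_cast h))
          have h1 : (1:ℤ) ≤ |((f i).1 : ℤ) - ((f j).1 : ℤ)| :=
            Int.one_le_abs (sub_ne_zero.mpr hne)
          exact_mod_cast h1
        have hcoord : |(v i - v j) 0| = s * |((f i).1 : ℝ) - ((f j).1 : ℝ)| := by
          rw [hsub]
          simp [he, EuclideanSpace.single_apply, abs_mul, abs_of_pos hspos]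
        calc s = s * 1 := (mul_one s).symm
          _ ≤ s * |((f i).1 : ℝ) - ((f j).1 : ℝ)| :=
              mul_le_mul_of_nonneg_left hone hspos.le
          _ = |(v i - v j) 0| := hcoord.symm
          _ ≤ ‖v i - v j‖ := coord_le_norm _ _
          _ = dist (v i) (v j) := (dist_eq_norm _ _).symm
    have hμR : μ0 * R = s / 4 := by rw [hμ]; field_simp; try ring
    have hdisj : Disjoint (Metric.closedBall (v i) (μ0 * R))
        (Metric.closedBall (v j) (μ0 * R)) := by
      apply Metric.closedBall_disjoint_closedBall
      rw [hμR]; linarith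
    exact hdisj.mono (interior_subset.trans (himg i)) (interior_subset.trans (himg j))
  · -- sum bound
    have hsum : ∑ _i : Fin n, μ0 = n * μ0 := by
      rw [Finset.sum_const, Finset.card_fin, nsmul_eq_mul]
    rw [hsum, hμ, hs]
    have hs2 : Real.sqrt n * Real.sqrt n = n := Real.mul_self_sqrt n.cast_nonneg
    have e1 : r / (16*R) * Real.sqrt n = r * Real.sqrt n / (16*R) := by ring
    have e2 : (n:ℝ) * (r / (2*(m:ℝ)) / (4*R)) = (n:ℝ) * r / (8*R*(m:ℝ)) := by
      field_simp; ring
    rw [e1, e2, div_le_div_iff₀ (by positivity) (by positivity)]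
    nlinarith [mul_nonneg (mul_nonneg hr.le hRpos.le) (Real.sqrt_nonneg (n:ℝ)), hm2, hs2,
      mul_nonneg (mul_nonneg (mul_nonneg hr.le hRpos.le) (Real.sqrt_nonneg (n:ℝ)))
        (by linarith : (0:ℝ) ≤ 2 * Real.sqrt n - m)]
end

section
/- Let C and D be convex bodies in ℝ². There exists a constant ρ > 0 (depending on C and D) such that for every n ≥ 2 and every packing C₁,…,Cₙ in D of positive homothets of C (Cᵢ = vᵢ + μᵢ • C, μᵢ > 0) in which every Cᵢ intersects the topological frontier of D, one has ∑ᵢ μᵢ ≤ ρ · log n. (This is Proposition 2: the total perimeter of a boundary-touching packing of homothets is O(log n).) -/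
open MeasureTheory Metric Set Pointwise

private lemma image_homothet_eq (a : EuclideanSpace ℝ (Fin 2)) (m : ℝ)
    (s : Set (EuclideanSpace ℝ (Fin 2))) :
    (fun x => a + m • x) '' s = a +ᵥ (m • s) := by
  rw [← Set.image_vadd, ← Set.image_smul, ← Set.image_comp]
  rfl

private lemma vol_homothet (a : EuclideanSpace ℝ (Fin 2)) (m : ℝ)
    (s : Set (EuclideanSpace ℝ (Fin 2))) :
    volume ((fun x => a + m • x) '' s) = ENNReal.ofReal (m ^ 2) * volume s := by
  rw [image_homothet_eq, measure_vadd, Measure.addHaar_smul, finrank_euclideanSpace_fin,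
    abs_of_nonneg (sq_nonneg m)]

private lemma interior_homothet (a : EuclideanSpace ℝ (Fin 2)) {m : ℝ} (hm : m ≠ 0)
    (s : Set (EuclideanSpace ℝ (Fin 2))) :
    interior ((fun x => a + m • x) '' s) = (fun x => a + m • x) '' interior s := by
  let h : EuclideanSpace ℝ (Fin 2) ≃ₜ EuclideanSpace ℝ (Fin 2) :=
    (Homeomorph.smulOfNeZero m hm).trans (Homeomorph.addLeft a)
  have he : (fun x : EuclideanSpace ℝ (Fin 2) => a + m • x) = ⇑h := rfl
  rw [he, h.image_interior]

private lemma annulus_bound {D : Set (EuclideanSpace ℝ (Fin 2))} (hDconv : Convex ℝ D)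
    (hDcpt : IsCompact D) {x₀ : EuclideanSpace ℝ (Fin 2)} {r : ℝ} (hr : 0 < r)
    (hball : ball x₀ r ⊆ D) {w : ℝ} (hw : 0 < w) :
    volume {y | y ∈ D ∧ ∃ p ∈ frontier D, dist y p ≤ w}
      ≤ ENNReal.ofReal (4 * w / r) * volume D := by
  by_cases hcase : 1 ≤ 2 * w / r
  · calc volume {y | y ∈ D ∧ ∃ p ∈ frontier D, dist y p ≤ w} ≤ volume D :=
          measure_mono fun y hy => hy.1
    _ = 1 * volume D := (one_mul _).symm
    _ ≤ ENNReal.ofReal (4 * w / r) * volume D := by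
        apply mul_le_mul_left
        rw [← ENNReal.ofReal_one]
        apply ENNReal.ofReal_le_ofReal
        have h1 : 2 * w / r = 2 * (w / r) := by ring
        have h2 : 4 * w / r = 4 * (w / r) := by ring
        have h3 : 0 < w / r := div_pos hw hr
        linarith
  push_neg at hcase
  set t := 2 * w / r with ht
  have ht0 : 0 < t := by positivity
  have hx₀ : x₀ ∈ D := hball (mem_ball_self hr)
  set f := fun y : EuclideanSpace ℝ (Fin 2) => x₀ + (1 - t) • (y - x₀) with hf
  set E := f '' D with hE
  have hfz : ∀ z, f z = (1 - t) • z + t • x₀ := by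
    intro z
    simp only [hf, smul_sub]
    module
  have hED : E ⊆ D := by
    rintro _ ⟨z, hz, rfl⟩
    rw [hfz]
    exact hDconv hz hx₀ (by linarith) ht0.le (by ring)
  have hkey : ∀ y ∈ E, ∀ p ∈ frontier D, t * r ≤ dist y p := by
    rintro _ ⟨z, hz, rfl⟩ p hp
    by_contra hlt
    push_neg at hlt
    have hballz : ball (f z) (t * r) ⊆ D := by
      intro u hu
      have hmem : x₀ + t⁻¹ • (u - f z) ∈ ball x₀ r := by
        rw [mem_ball, dist_eq_norm]
        have he : x₀ + t⁻¹ • (u - f z) - x₀ = t⁻¹ • (u - f z) := by abel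
        rw [he, norm_smul, norm_inv, Real.norm_eq_abs, abs_of_pos ht0]
        rw [mem_ball, dist_eq_norm] at hu
        calc t⁻¹ * ‖u - f z‖ < t⁻¹ * (t * r) := by
              apply mul_lt_mul_of_pos_left hu (inv_pos.mpr ht0)
        _ = r := by field_simp
      have hmem' := hball hmem
      have hrepr : u = (1 - t) • z + t • (x₀ + t⁻¹ • (u - f z)) := by
        rw [smul_add, smul_smul, mul_inv_cancel₀ ht0.ne', one_smul, hfz]
        abel
      rw [hrepr]
      exact hDconv hz hmem' (by linarith) ht0.le (by ring)
    rw [frontier_eq_closure_inter_closure] at hp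
    obtain ⟨q, hq1, hq2⟩ := mem_closure_iff.mp hp.2 (ball (f z) (t * r)) isOpen_ball
      (by rw [mem_ball]; rw [dist_comm] at hlt; exact hlt)
    exact hq2 (hballz hq1)
  have hfc : Continuous f := by
    apply Continuous.add continuous_const
    fun_prop
  have hEmeas : MeasurableSet E := (hDcpt.image hfc).measurableSet
  have hvolE : volume E = ENNReal.ofReal ((1 - t) ^ 2) * volume D := by
    have hfeq : f = fun y => (x₀ - (1 - t) • x₀) + (1 - t) • y := by
      funext y
      simp only [hf, smul_sub]
      abel
    rw [hE, hfeq, vol_homothet]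
  have hsub : {y | y ∈ D ∧ ∃ p ∈ frontier D, dist y p ≤ w} ⊆ D \ E := by
    rintro y ⟨hyD, p, hp, hdp⟩
    refine ⟨hyD, fun hyE => ?_⟩
    have h1 := hkey y hyE p hp
    have htr : t * r = 2 * w := by
      rw [ht]; field_simp
    linarith
  calc volume {y | y ∈ D ∧ ∃ p ∈ frontier D, dist y p ≤ w} ≤ volume (D \ E) :=
        measure_mono hsub
  _ = volume D - volume E :=
      measure_diff hED hEmeas.nullMeasurableSet
        (ne_of_lt (lt_of_le_of_lt (measure_mono hED) hDcpt.measure_lt_top))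
  _ ≤ ENNReal.ofReal (4 * w / r) * volume D := by
      rw [tsub_le_iff_right, hvolE, ← add_mul, ← ENNReal.ofReal_add (by positivity) (sq_nonneg _)]
      calc volume D = 1 * volume D := (one_mul _).symm
      _ ≤ ENNReal.ofReal (4 * w / r + (1 - t) ^ 2) * volume D := by
          apply mul_le_mul_left
          rw [← ENNReal.ofReal_one]
          apply ENNReal.ofReal_le_ofReal
          have h4 : 4 * w / r = 2 * t := by rw [ht]; ring
          nlinarith [sq_nonneg t]

/-- Proposition 2: There is `ρ > 0` (depending on `C` and `D`) such that
for every `n ≥ 2` and every packing of `n` positive homothets of `C` in `D`, each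
touching the frontier of `D`, the homothety factors sum to at most `ρ · log n`. -/
theorem boundary_touching_packing_log_bound
    (C D : Set (EuclideanSpace ℝ (Fin 2)))
    (hCconv : Convex ℝ C) (hCcpt : IsCompact C) (hCint : (interior C).Nonempty)
    (hDconv : Convex ℝ D) (hDcpt : IsCompact D) (hDint : (interior D).Nonempty) :
    ∃ ρ : ℝ, 0 < ρ ∧ ∀ n : ℕ, 2 ≤ n →
      ∀ (v : Fin n → EuclideanSpace ℝ (Fin 2)) (μ : Fin n → ℝ),
        (∀ i, 0 < μ i) →
        (∀ i, (fun x => v i + μ i • x) '' C ⊆ D) →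
        (∀ i j, i ≠ j →
          Disjoint (interior ((fun x => v i + μ i • x) '' C))
                   (interior ((fun x => v j + μ j • x) '' C))) →
        (∀ i, (((fun x => v i + μ i • x) '' C) ∩ frontier D).Nonempty) →
        ∑ i, μ i ≤ ρ * Real.log n := by
  classical
  obtain ⟨x₀, hx₀⟩ := hDint
  obtain ⟨r, hr, hball⟩ := Metric.isOpen_iff.mp isOpen_interior x₀ hx₀
  have hballD : ball x₀ r ⊆ D := hball.trans interior_subset
  set c := volume (interior C) with hcdef
  have hc0 : 0 < c := isOpen_interior.measure_pos volume hCint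
  have hcfin : c ≠ ⊤ :=
    (lt_of_le_of_lt (measure_mono interior_subset) hCcpt.measure_lt_top).ne
  set vD := volume D with hvDdef
  have hvD0 : 0 < vD :=
    lt_of_lt_of_le (isOpen_interior.measure_pos volume ⟨x₀, hx₀⟩)
      (measure_mono interior_subset)
  have hvDfin : vD ≠ ⊤ := hDcpt.measure_lt_top.ne
  set c' := c.toReal with hc'def
  set vD' := vD.toReal with hvD'def
  have hc'0 : 0 < c' := ENNReal.toReal_pos hc0.ne' hcfin
  have hvD'0 : 0 < vD' := ENNReal.toReal_pos hvD0.ne' hvDfin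
  set M := Real.sqrt (vD' / c') with hMdef
  have hM0 : 0 < M := Real.sqrt_pos.mpr (div_pos hvD'0 hc'0)
  set dC := diam C + 1 with hdCdef
  have hdC0 : 0 < dC := by positivity
  have hdC1 : diam C ≤ dC := by simp [hdCdef]
  set B := 16 * dC * vD' / (r * c') with hBdef
  have hB0 : 0 < B := by positivity
  have hlog2 : 0 < Real.log 2 := Real.log_pos one_lt_two
  refine ⟨(2 * B + M) / Real.log 2 + 1, by positivity, ?_⟩
  intro n hn v μ hμ hsub hdisj htouch
  -- basic facts about the pieces
  have hvolint : ∀ i, volume (interior ((fun x => v i + μ i • x) '' C))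
      = ENNReal.ofReal ((μ i) ^ 2) * c := by
    intro i
    rw [interior_homothet _ (hμ i).ne', vol_homothet]
  have hMbound : ∀ i, μ i ≤ M := by
    intro i
    have h1 : ENNReal.ofReal ((μ i) ^ 2) * c ≤ vD := by
      rw [← hvolint i]
      exact measure_mono (interior_subset.trans (hsub i))
    have h2 := ENNReal.toReal_mono hvDfin h1
    rw [ENNReal.toReal_mul, ENNReal.toReal_ofReal (sq_nonneg _)] at h2
    have h3 : (μ i) ^ 2 ≤ vD' / c' := (le_div_iff₀ hc'0).mpr h2
    calc μ i = Real.sqrt ((μ i) ^ 2) := (Real.sqrt_sq (hμ i).le).symm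
    _ ≤ M := Real.sqrt_le_sqrt h3
  have hdistp : ∀ i, ∃ p ∈ frontier D,
      ∀ y ∈ (fun x => v i + μ i • x) '' C, dist y p ≤ μ i * dC := by
    intro i
    obtain ⟨p, hpP, hpF⟩ := htouch i
    refine ⟨p, hpF, ?_⟩
    rintro _ ⟨x, hx, rfl⟩
    obtain ⟨x', hx', rfl⟩ := hpP
    calc dist (v i + μ i • x) (v i + μ i • x') = dist (μ i • x) (μ i • x') := by
          rw [dist_add_left]
    _ = ‖μ i‖ * dist x x' := dist_smul₀ _ _ _
    _ ≤ μ i * dC := by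
        rw [Real.norm_eq_abs, abs_of_pos (hμ i)]
        apply mul_le_mul_of_nonneg_left _ (hμ i).le
        exact (dist_le_diam_of_mem hCcpt.isBounded hx hx').trans hdC1
  -- scale classes
  set T : ℕ → Finset (Fin n) :=
    fun k => Finset.univ.filter (fun i => M / 2 ^ (k + 1) < μ i ∧ μ i ≤ M / 2 ^ k) with hTdef
  have hclass : ∀ k, ∑ i ∈ T k, μ i ≤ B := by
    intro k
    set q := M / 2 ^ k with hqdef
    have hq0 : 0 < q := by positivity
    have hqhalf : M / 2 ^ (k + 1) = q / 2 := by
      rw [hqdef, pow_succ]; ring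
    have hdisjT : (↑(T k) : Set (Fin n)).PairwiseDisjoint
        (fun i => interior ((fun x => v i + μ i • x) '' C)) :=
      fun i _ j _ hij => hdisj i j hij
    have h1 : ∑ i ∈ T k, volume (interior ((fun x => v i + μ i • x) '' C))
        ≤ ENNReal.ofReal (4 * (q * dC) / r) * vD := by
      rw [← measure_biUnion_finset hdisjT (fun i _ => isOpen_interior.measurableSet)]
      refine le_trans (measure_mono ?_)
        (annulus_bound hDconv hDcpt hr hballD (by positivity))
      intro y hy
      rw [Set.mem_iUnion₂] at hy
      obtain ⟨i, hiT, hyi⟩ := hy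
      have hyP : y ∈ (fun x => v i + μ i • x) '' C := interior_subset hyi
      obtain ⟨p, hpF, hp⟩ := hdistp i
      refine ⟨hsub i hyP, p, hpF, ?_⟩
      have hik := (Finset.mem_filter.mp hiT).2.2
      calc dist y p ≤ μ i * dC := hp y hyP
      _ ≤ q * dC := by
          apply mul_le_mul_of_nonneg_right hik hdC0.le
    have hlow : ∀ i ∈ T k, ENNReal.ofReal ((q / 2) ^ 2) * c
        ≤ volume (interior ((fun x => v i + μ i • x) '' C)) := by
      intro i hi
      rw [hvolint i]
      apply mul_le_mul_left
      apply ENNReal.ofReal_le_ofReal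
      have hiq := (Finset.mem_filter.mp hi).2.1
      rw [hqhalf] at hiq
      have : 0 ≤ q / 2 := by positivity
      nlinarith
    have h2 : ((T k).card : ENNReal) * (ENNReal.ofReal ((q / 2) ^ 2) * c)
        ≤ ∑ i ∈ T k, volume (interior ((fun x => v i + μ i • x) '' C)) := by
      have := Finset.card_nsmul_le_sum (T k)
        (fun i => volume (interior ((fun x => v i + μ i • x) '' C)))
        (ENNReal.ofReal ((q / 2) ^ 2) * c) hlow
      simpa [nsmul_eq_mul] using this
    have h3 : ((T k).card : ℝ) * ((q / 2) ^ 2 * c') ≤ 4 * (q * dC) / r * vD' := by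
      have h := ENNReal.toReal_mono
        (ENNReal.mul_ne_top ENNReal.ofReal_ne_top hvDfin) (h2.trans h1)
      rw [ENNReal.toReal_mul, ENNReal.toReal_mul, ENNReal.toReal_ofReal (by positivity),
        ENNReal.toReal_mul, ENNReal.toReal_ofReal (by positivity), ENNReal.toReal_natCast] at h
      exact h
    have h4 : ∑ i ∈ T k, μ i ≤ ((T k).card : ℝ) * q := by
      have := Finset.sum_le_card_nsmul (T k) μ q
        (fun i hi => (Finset.mem_filter.mp hi).2.2)
      simpa [nsmul_eq_mul] using this
    have h5 : ((T k).card : ℝ) * q ≤ B := by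
      rw [← mul_le_mul_iff_left₀ (show (0:ℝ) < q * c' / 4 by positivity)]
      have hL : ((T k).card : ℝ) * q * (q * c' / 4)
          = ((T k).card : ℝ) * ((q / 2) ^ 2 * c') := by ring
      have hR : B * (q * c' / 4) = 4 * (q * dC) / r * vD' := by
        rw [hBdef]
        field_simp
        ring
      rw [hL, hR]
      exact h3
    exact h4.trans h5
  -- split off the tail
  set K := Nat.clog 2 n with hKdef
  have hnK : n ≤ 2 ^ K := Nat.le_pow_clog one_lt_two n
  have hK1 : 1 ≤ K := by
    by_contra h
    push_neg at h
    interval_cases K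
    · omega
  have hsplit := Finset.sum_filter_add_sum_filter_not Finset.univ
    (fun i => M / 2 ^ K < μ i) μ
  set S₁ := Finset.univ.filter (fun i : Fin n => M / 2 ^ K < μ i) with hS₁def
  set S₂ := Finset.univ.filter (fun i : Fin n => ¬ (M / 2 ^ K < μ i)) with hS₂def
  have hS2 : ∑ i ∈ S₂, μ i ≤ M := by
    have h1 : ∑ i ∈ S₂, μ i ≤ (S₂.card : ℝ) * (M / 2 ^ K) := by
      have := Finset.sum_le_card_nsmul S₂ μ (M / 2 ^ K)
        (fun i hi => not_lt.mp (Finset.mem_filter.mp hi).2)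
      simpa [nsmul_eq_mul] using this
    have h2 : (S₂.card : ℝ) ≤ (2 : ℝ) ^ K := by
      have hcard : S₂.card ≤ n := (Finset.card_filter_le _ _).trans (by simp)
      have : (S₂.card : ℝ) ≤ (n : ℝ) := by exact_mod_cast hcard
      refine this.trans ?_
      exact_mod_cast hnK
    calc ∑ i ∈ S₂, μ i ≤ (S₂.card : ℝ) * (M / 2 ^ K) := h1
    _ ≤ (2 : ℝ) ^ K * (M / 2 ^ K) := by
        apply mul_le_mul_of_nonneg_right h2 (by positivity)
    _ = M := by field_simp
  have hTpair : ∀ k k', k < k' → ∀ i, i ∈ T k → i ∈ T k' → False := by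
    intro k k' hkk' i hik hik'
    have h1 := (Finset.mem_filter.mp hik).2.1
    have h2 := (Finset.mem_filter.mp hik').2.2
    have h3 : M / 2 ^ k' ≤ M / 2 ^ (k + 1) := by
      apply div_le_div_of_nonneg_left hM0.le (by positivity)
      exact pow_le_pow_right₀ (by norm_num) hkk'
    linarith
  have hTdisj : (↑(Finset.range K) : Set ℕ).PairwiseDisjoint T := by
    intro k _ k' _ hkk'
    apply Finset.disjoint_left.mpr
    intro i hik hik'
    rcases hkk'.lt_or_gt with h | h
    · exact hTpair k k' h i hik hik'
    · exact hTpair k' k h i hik' hik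
  have hcover : S₁ ⊆ (Finset.range K).biUnion T := by
    intro i hi
    have hiM : M / 2 ^ K < μ i := (Finset.mem_filter.mp hi).2
    have hex : ∃ j, M / 2 ^ j < μ i := ⟨K, hiM⟩
    set k₀ := Nat.find hex with hk₀def
    have hP : M / 2 ^ k₀ < μ i := Nat.find_spec hex
    have hk₀K : k₀ ≤ K := Nat.find_min' hex hiM
    have hk₀pos : 0 < k₀ := by
      rcases Nat.eq_zero_or_pos k₀ with h0 | h0
      · exfalso
        rw [h0] at hP
        simp at hP
        exact absurd (hMbound i) (not_le.mpr hP)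
      · exact h0
    have hnot : ¬ (M / 2 ^ (k₀ - 1) < μ i) := Nat.find_min hex (Nat.sub_lt hk₀pos one_pos)
    refine Finset.mem_biUnion.mpr ⟨k₀ - 1, Finset.mem_range.mpr (by omega),
      Finset.mem_filter.mpr ⟨Finset.mem_univ _, ?_, not_lt.mp hnot⟩⟩
    have hsucc : k₀ - 1 + 1 = k₀ := Nat.succ_pred_eq_of_pos hk₀pos
    rw [hsucc]
    exact hP
  have hS1 : ∑ i ∈ S₁, μ i ≤ (K : ℝ) * B := by
    calc ∑ i ∈ S₁, μ i ≤ ∑ i ∈ (Finset.range K).biUnion T, μ i :=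
          Finset.sum_le_sum_of_subset_of_nonneg hcover (fun i _ _ => (hμ i).le)
    _ = ∑ k ∈ Finset.range K, ∑ i ∈ T k, μ i := Finset.sum_biUnion hTdisj
    _ ≤ ∑ _k ∈ Finset.range K, B := Finset.sum_le_sum (fun k _ => hclass k)
    _ = (K : ℝ) * B := by simp [Finset.sum_const, nsmul_eq_mul]
  -- final log comparison
  have hlogn : Real.log 2 ≤ Real.log n :=
    Real.log_le_log (by norm_num) (by exact_mod_cast hn)
  have hlogn0 : 0 < Real.log n := lt_of_lt_of_le hlog2 hlogn
  have hL1 : 1 ≤ Real.log n / Real.log 2 := (one_le_div hlog2).mpr hlogn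
  have hKle : (K : ℝ) ≤ Real.log n / Real.log 2 + 1 := by
    have hpow : 2 ^ (K - 1) < n := by
      have := Nat.pow_pred_clog_lt_self (b := 2) one_lt_two (x := n) (by omega)
      simpa [hKdef, Nat.pred_eq_sub_one] using this
    have hlogpow : ((K - 1 : ℕ) : ℝ) * Real.log 2 ≤ Real.log n := by
      rw [← Real.log_pow]
      apply Real.log_le_log (by positivity)
      exact_mod_cast hpow.le
    have hcast : ((K - 1 : ℕ) : ℝ) = (K : ℝ) - 1 := by
      push_cast [Nat.cast_sub hK1]
      ring
    rw [hcast] at hlogpow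
    have := (le_div_iff₀ hlog2).mpr hlogpow
    linarith
  have htotal : ∑ i, μ i ≤ (K : ℝ) * B + M := by
    rw [← hsplit]
    exact add_le_add hS1 hS2
  set L := Real.log n / Real.log 2 with hLdef
  calc ∑ i, μ i ≤ (K : ℝ) * B + M := htotal
  _ ≤ (L + 1) * B + M := by nlinarith
  _ ≤ L * (2 * B + M) := by nlinarith
  _ = (2 * B + M) / Real.log 2 * Real.log n := by
      rw [hLdef]; field_simp
  _ ≤ ((2 * B + M) / Real.log 2 + 1) * Real.log n := by nlinarith
end

section
/- There exists a constant K > 0 such that for every n ≥ 2, if B₁,…,Bₙ are closed disks (closed balls in ℝ²) with radii r₁,…,rₙ > 0, contained in the unit square U = [0,1]², with pairwise disjoint interiors, and each Bᵢ intersects the frontier of U, then ∑ᵢ rᵢ ≤ K · log n. (Upper bound part of Theorem 1: the total perimeter of n disjoint disks in the unit square that touch its boundary is O(log n).) -/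
open MeasureTheory Metric Set

/-- The unit square `[0,1]² ⊆ ℝ²`. -/
def unitSquare : Set (EuclideanSpace ℝ (Fin 2)) :=
  {p | p 0 ∈ Set.Icc (0 : ℝ) 1 ∧ p 1 ∈ Set.Icc (0 : ℝ) 1}

lemma fin2_cases (a b k : Fin 2) (hab : a ≠ b) : k = a ∨ k = b := by
  fin_cases a <;> fin_cases b <;> fin_cases k <;> simp_all

lemma coord_dist_le (p q : EuclideanSpace ℝ (Fin 2)) (a : Fin 2) :
    |p a - q a| ≤ dist p q := by
  rw [EuclideanSpace.dist_eq]
  have h1 : |p a - q a| = Real.sqrt ((p a - q a)^2) := (Real.sqrt_sq_eq_abs _).symm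
  rw [h1]
  apply Real.sqrt_le_sqrt
  have := Finset.single_le_sum (f := fun i => dist (p i) (q i) ^ 2)
    (fun i _ => sq_nonneg _) (Finset.mem_univ a)
  simpa [Real.dist_eq] using this

lemma dist_le_of_sq (a b : Fin 2) (hab : a ≠ b) (p q : EuclideanSpace ℝ (Fin 2)) (r : ℝ)
    (hr : 0 ≤ r) (h : (p a - q a)^2 + (p b - q b)^2 ≤ r^2) : dist p q ≤ r := by
  rw [EuclideanSpace.dist_eq]
  have huniv : (Finset.univ : Finset (Fin 2)) = {a, b} := by
    ext k; simp [fin2_cases a b k hab]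
  rw [huniv, Finset.sum_pair hab]
  calc Real.sqrt (dist (p a) (q a) ^ 2 + dist (p b) (q b) ^ 2)
      ≤ Real.sqrt (r^2) := by
        apply Real.sqrt_le_sqrt
        simpa [Real.dist_eq, sq_abs] using h
    _ = r := Real.sqrt_sq hr

lemma coords_bounds (x : EuclideanSpace ℝ (Fin 2)) (r : ℝ) (hr : 0 < r)
    (hsub : closedBall x r ⊆ unitSquare) :
    r ≤ x 0 ∧ x 0 ≤ 1 - r ∧ r ≤ x 1 ∧ x 1 ≤ 1 - r := by
  have key : ∀ (s0 s1 : ℝ), s0^2 + s1^2 ≤ r^2 →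
      (x 0 + s0 ∈ Icc (0:ℝ) 1 ∧ x 1 + s1 ∈ Icc (0:ℝ) 1) := by
    intro s0 s1 hs
    set y : EuclideanSpace ℝ (Fin 2) :=
      (WithLp.equiv 2 (Fin 2 → ℝ)).symm ![x 0 + s0, x 1 + s1] with hy
    have hy0 : y 0 = x 0 + s0 := by rw [hy, WithLp.equiv_symm_apply]; rfl
    have hy1 : y 1 = x 1 + s1 := by rw [hy, WithLp.equiv_symm_apply]; rfl
    have hmem : y ∈ closedBall x r := by
      rw [mem_closedBall]
      apply dist_le_of_sq 0 1 (by decide) y x r hr.le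
      rw [hy0, hy1]
      ring_nf
      ring_nf at hs
      linarith
    have := hsub hmem
    rw [unitSquare, Set.mem_setOf_eq, hy0, hy1] at this
    exact this
  have h1 := key (-r) 0 (by nlinarith)
  have h2 := key r 0 (by nlinarith)
  have h3 := key 0 (-r) (by nlinarith)
  have h4 := key 0 r (by nlinarith)
  simp only [Set.mem_Icc] at h1 h2 h3 h4
  refine ⟨by linarith [h1.1.1], by linarith [h2.1.2], by linarith [h3.2.1], by linarith [h4.2.2]⟩

lemma unitSquare_eq : unitSquare =
    (EuclideanSpace.proj (0 : Fin 2) : EuclideanSpace ℝ (Fin 2) → ℝ) ⁻¹' (Icc 0 1) ∩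
    (EuclideanSpace.proj (1 : Fin 2) : EuclideanSpace ℝ (Fin 2) → ℝ) ⁻¹' (Icc 0 1) := rfl

lemma tangent_cases (x : EuclideanSpace ℝ (Fin 2)) (r : ℝ) (hr : 0 < r)
    (hsub : closedBall x r ⊆ unitSquare)
    (hfr : (closedBall x r ∩ frontier unitSquare).Nonempty) :
    (x 0 = r) ∨ (x 0 = 1 - r) ∨ (x 1 = r) ∨ (x 1 = 1 - r) := by
  obtain ⟨q, hqball, hqfr⟩ := hfr
  have hclosed : IsClosed unitSquare := by
    rw [unitSquare_eq]
    exact (isClosed_Icc.preimage (EuclideanSpace.proj (0:Fin 2)).continuous).inter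
      (isClosed_Icc.preimage (EuclideanSpace.proj (1:Fin 2)).continuous)
  have hVopen : IsOpen ((EuclideanSpace.proj (0 : Fin 2) : EuclideanSpace ℝ (Fin 2) → ℝ) ⁻¹' (Ioo 0 1) ∩
      (EuclideanSpace.proj (1 : Fin 2) : EuclideanSpace ℝ (Fin 2) → ℝ) ⁻¹' (Ioo 0 1)) :=
    (isOpen_Ioo.preimage (EuclideanSpace.proj (0:Fin 2)).continuous).inter
      (isOpen_Ioo.preimage (EuclideanSpace.proj (1:Fin 2)).continuous)
  have hVsub : ((EuclideanSpace.proj (0 : Fin 2) : EuclideanSpace ℝ (Fin 2) → ℝ) ⁻¹' (Ioo 0 1) ∩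
      (EuclideanSpace.proj (1 : Fin 2) : EuclideanSpace ℝ (Fin 2) → ℝ) ⁻¹' (Ioo 0 1)) ⊆ interior unitSquare := by
    apply interior_maximal _ hVopen
    rw [unitSquare_eq]
    exact Set.inter_subset_inter (Set.preimage_mono Ioo_subset_Icc_self)
      (Set.preimage_mono Ioo_subset_Icc_self)
  rw [hclosed.frontier_eq] at hqfr
  obtain ⟨hqU, hqni⟩ := hqfr
  have hqV : ¬ (q 0 ∈ Ioo (0:ℝ) 1 ∧ q 1 ∈ Ioo (0:ℝ) 1) := by
    intro h
    exact hqni (hVsub ⟨h.1, h.2⟩)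
  rw [unitSquare, Set.mem_setOf_eq] at hqU
  obtain ⟨⟨h00, h01⟩, h10, h11⟩ := hqU
  have hb := coords_bounds x r hr hsub
  have hd0 : |x 0 - q 0| ≤ r := le_trans (coord_dist_le x q 0) (by rwa [dist_comm, ← mem_closedBall])
  have hd1 : |x 1 - q 1| ≤ r := le_trans (coord_dist_le x q 1) (by rwa [dist_comm, ← mem_closedBall])
  rw [abs_le] at hd0 hd1
  simp only [Set.mem_Ioo, not_and_or, not_and, not_lt] at hqV
  rcases hqV with (h | h) | (h | h)
  · left; linarith [hb.1, hd0.1]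
  · right; left; linarith [hb.2.1, hd0.2]
  · right; right; left; linarith [hb.2.2.1, hd1.1]
  · right; right; right; linarith [hb.2.2.2, hd1.2]

/-- volume of an axis-parallel box in `EuclideanSpace ℝ (Fin 2)`. -/
lemma volume_box (a b : Fin 2) (hab : a ≠ b) (A B : Set ℝ) (hA : MeasurableSet A)
    (hB : MeasurableSet B) :
    volume {p : EuclideanSpace ℝ (Fin 2) | p a ∈ A ∧ p b ∈ B} = volume A * volume B := by
  classical
  set I : Fin 2 → Set ℝ := fun k => if k = a then A else B with hI
  have hset : {p : EuclideanSpace ℝ (Fin 2) | p a ∈ A ∧ p b ∈ B}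
      = (MeasurableEquiv.toLp 2 (Fin 2 → ℝ)).symm ⁻¹' (Set.pi univ I) := by
    ext p
    simp only [Set.mem_setOf_eq, Set.mem_preimage, Set.mem_pi, Set.mem_univ, forall_true_left]
    constructor
    · intro ⟨h1, h2⟩ k
      rcases fin2_cases a b k hab with rfl | rfl
      · simpa [hI] using h1
      · simpa [hI, hab.symm] using h2
    · intro h
      refine ⟨by simpa [hI] using h a, by simpa [hI, hab.symm] using h b⟩
  have hmeas : MeasurableSet (Set.pi univ I) := by
    apply MeasurableSet.univ_pi
    intro k
    by_cases hk : k = a <;> simp [hI, hk, hA, hB]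
  rw [hset, (EuclideanSpace.volume_preserving_symm_measurableEquiv_toLp (Fin 2)).measure_preimage
    hmeas.nullMeasurableSet, volume_pi_pi]
  have huniv : (Finset.univ : Finset (Fin 2)) = {a, b} := by
    ext k; simp [fin2_cases a b k hab]
  rw [huniv, Finset.prod_pair hab]
  simp [hI, hab.symm]

lemma continuous_coord (a : Fin 2) : Continuous fun p : EuclideanSpace ℝ (Fin 2) => p a :=
  (EuclideanSpace.proj a).continuous

/-- Counting lemma: at most `3/t` disks of radius `≥ t` tangent to a fixed side. -/
lemma counting {n : ℕ} (x : Fin n → EuclideanSpace ℝ (Fin 2)) (r : Fin n → ℝ)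
    (hr : ∀ i, 0 < r i) (hsub : ∀ i, closedBall (x i) (r i) ⊆ unitSquare)
    (hdisj : ∀ i j, i ≠ j → Disjoint (interior (closedBall (x i) (r i)))
      (interior (closedBall (x j) (r j))))
    (S : Finset (Fin n)) (a b : Fin 2) (hab : a ≠ b) (j t : ℝ) (ht : 0 < t) (ht2 : t ≤ 2)
    (hrt : ∀ i ∈ S, t ≤ r i)
    (htan : ∀ i ∈ S, ∀ v, v ∈ Icc j (j + t/2) → |v - x i a| ≤ r i - t/2) :
    (S.card : ℝ) ≤ 3 / t := by
  classical
  set O : Fin n → Set (EuclideanSpace ℝ (Fin 2)) :=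
    fun i => {p | p a ∈ Ioo j (j + t/2) ∧ p b ∈ Ioo (x i b - t/2) (x i b + t/2)} with hO
  have hOsub : ∀ i ∈ S, O i ⊆ closedBall (x i) (r i) := by
    intro i hi p hp
    obtain ⟨hpa, hpb⟩ := hp
    have h1 : |p a - x i a| ≤ r i - t/2 := by
      exact htan i hi (p a) ⟨hpa.1.le, hpa.2.le⟩
    have h2 : |p b - x i b| ≤ t/2 := by
      rw [abs_le]; constructor <;> [linarith [hpb.1]; linarith [hpb.2]]
    rw [mem_closedBall]
    apply dist_le_of_sq a b hab p (x i) (r i) (hr i).le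
    have e1 : (p a - x i a)^2 ≤ (r i - t/2)^2 := by
      rw [← sq_abs]; exact pow_le_pow_left₀ (abs_nonneg _) h1 2
    have e2 : (p b - x i b)^2 ≤ (t/2)^2 := by
      rw [← sq_abs]; exact pow_le_pow_left₀ (abs_nonneg _) h2 2
    nlinarith [hrt i hi, ht]
  have hOopen : ∀ i, IsOpen (O i) := by
    intro i
    exact (isOpen_Ioo.preimage (continuous_coord a)).inter
      (isOpen_Ioo.preimage (continuous_coord b))
  have hOint : ∀ i ∈ S, O i ⊆ interior (closedBall (x i) (r i)) :=
    fun i hi => interior_maximal (hOsub i hi) (hOopen i)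
  have hpd : (↑S : Set (Fin n)).PairwiseDisjoint O := by
    intro i hi k hk hik
    exact (hdisj i k hik).mono (hOint i hi) (hOint k hk)
  have hxb : ∀ i, x i b ∈ Icc (0:ℝ) 1 := by
    intro i
    have hx : x i ∈ unitSquare := hsub i (mem_closedBall_self (hr i).le)
    fin_cases b
    · exact hx.1
    · exact hx.2
  set T : Set (EuclideanSpace ℝ (Fin 2)) :=
    {p | p a ∈ Icc j (j + t/2) ∧ p b ∈ Icc (-1 : ℝ) 2} with hT
  have hOT : ∀ i ∈ S, O i ⊆ T := by
    intro i _ p hp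
    obtain ⟨hpa, hpb⟩ := hp
    have := hxb i
    exact ⟨⟨hpa.1.le, hpa.2.le⟩, ⟨by linarith [this.1, hpb.1], by linarith [this.2, hpb.2]⟩⟩
  have hvolO : ∀ i, volume (O i) = ENNReal.ofReal ((t/2) * t) := by
    intro i
    rw [hO]
    rw [volume_box a b hab _ _ measurableSet_Ioo measurableSet_Ioo]
    rw [Real.volume_Ioo, Real.volume_Ioo, ← ENNReal.ofReal_mul (by linarith)]
    ring_nf
  have hvolT : volume T = ENNReal.ofReal ((t/2) * 3) := by
    rw [hT, volume_box a b hab _ _ measurableSet_Icc measurableSet_Icc]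
    rw [Real.volume_Icc, Real.volume_Icc, ← ENNReal.ofReal_mul (by linarith)]
    norm_num
  have hsum : ∑ i ∈ S, volume (O i) ≤ volume T := by
    rw [← measure_biUnion_finset hpd (fun i _ => (hOopen i).measurableSet)]
    apply measure_mono
    exact Set.iUnion₂_subset hOT
  rw [Finset.sum_congr rfl (fun i _ => hvolO i), Finset.sum_const, hvolT, nsmul_eq_mul] at hsum
  have hcard : (S.card : ℝ) * ((t/2) * t) ≤ (t/2) * 3 := by
    have h1 : ENNReal.ofReal ((S.card : ℝ) * ((t/2)*t)) ≤ ENNReal.ofReal ((t/2)*3) := by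
      rwa [ENNReal.ofReal_mul (by positivity), ENNReal.ofReal_natCast]
    exact (ENNReal.ofReal_le_ofReal_iff (by positivity)).mp h1
  rw [le_div_iff₀ ht]
  nlinarith [ht]

lemma sum_le_of_count {ι : Type*} [DecidableEq ι] :
    ∀ (m : ℕ) (S : Finset ι) (c : ι → ℝ), S.card = m →
    (∀ i ∈ S, 0 < c i ∧ c i ≤ 2) →
    (∀ t : ℝ, 0 < t → t ≤ 2 → ((S.filter (fun i => t ≤ c i)).card : ℝ) ≤ 3 / t) →
    ∑ i ∈ S, c i ≤ ∑ k ∈ Finset.range m, 3 / (k + 1 : ℝ) := by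
  intro m
  induction m with
  | zero =>
    intro S c hcard _ _
    rw [Finset.card_eq_zero.mp hcard]
    simp
  | succ m ih =>
    intro S c hcard hpos hcount
    have hne : S.Nonempty := Finset.card_pos.mp (by omega)
    obtain ⟨i₀, hi₀, hmin⟩ := S.exists_min_image c hne
    have ht0 : 0 < c i₀ := (hpos i₀ hi₀).1
    have ht2 : c i₀ ≤ 2 := (hpos i₀ hi₀).2
    have hfilt : S.filter (fun i => c i₀ ≤ c i) = S :=
      Finset.filter_true_of_mem (fun i hi => hmin i hi)
    have hbound : ((m : ℝ) + 1) ≤ 3 / c i₀ := by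
      have := hcount (c i₀) ht0 ht2
      rw [hfilt, hcard] at this
      push_cast at this
      linarith
    have hci₀ : c i₀ ≤ 3 / (m + 1 : ℝ) := by
      rw [le_div_iff₀ (by positivity)]
      rw [le_div_iff₀ ht0] at hbound
      linarith
    have hIH : ∑ i ∈ S.erase i₀, c i ≤ ∑ k ∈ Finset.range m, 3 / (k + 1 : ℝ) := by
      apply ih (S.erase i₀) c (by rw [Finset.card_erase_of_mem hi₀, hcard]; omega)
      · exact fun i hi => hpos i (Finset.mem_of_mem_erase hi)
      · intro t ht ht2'
        calc (((S.erase i₀).filter (fun i => t ≤ c i)).card : ℝ)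
            ≤ ((S.filter (fun i => t ≤ c i)).card : ℝ) := by
              exact_mod_cast Finset.card_le_card
                (Finset.filter_subset_filter _ (Finset.erase_subset _ _))
          _ ≤ 3 / t := hcount t ht ht2'
    calc ∑ i ∈ S, c i = c i₀ + ∑ i ∈ S.erase i₀, c i := (Finset.add_sum_erase S c hi₀).symm
      _ ≤ 3 / (m + 1 : ℝ) + ∑ k ∈ Finset.range m, 3 / (k + 1 : ℝ) := add_le_add hci₀ hIH
      _ = ∑ k ∈ Finset.range (m + 1), 3 / (k + 1 : ℝ) := by
          rw [Finset.sum_range_succ]; push_cast; ring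

lemma harmonic_bound : ∀ m : ℕ, 1 ≤ m →
    ∑ k ∈ Finset.range m, 3 / (k + 1 : ℝ) ≤ 3 * (1 + Real.log m) := by
  intro m
  induction m with
  | zero => omega
  | succ m ih =>
    intro _
    rcases Nat.eq_or_lt_of_le (Nat.one_le_iff_ne_zero.mpr (Nat.succ_ne_zero m)) with h | h
    · have hm0 : m = 0 := by omega
      subst hm0
      norm_num
    · have hm : 1 ≤ m := by omega
      have hmr : (0:ℝ) < m := by positivity
      have hlog : 1 / (m + 1 : ℝ) ≤ Real.log (m + 1) - Real.log m := by
        have hx : (0:ℝ) < (m : ℝ) / (m + 1) := by positivity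
        have := Real.log_le_sub_one_of_pos hx
        rw [Real.log_div (by positivity) (by positivity)] at this
        have h2 : Real.log m - Real.log (m+1) ≤ (m:ℝ)/(m+1) - 1 := this
        have he : (m:ℝ)/(m+1) - 1 = -(1/(m+1)) := by field_simp; ring
        rw [he] at h2
        linarith
      rw [Finset.sum_range_succ]
      have := ih hm
      push_cast at this ⊢
      have h3 : (3:ℝ)/(↑m+1) = 3 * (1/(↑m+1)) := by ring
      linarith

/-- Per-side bound. -/
lemma side_bound {n : ℕ} (x : Fin n → EuclideanSpace ℝ (Fin 2)) (r : Fin n → ℝ)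
    (hr : ∀ i, 0 < r i) (hsub : ∀ i, closedBall (x i) (r i) ⊆ unitSquare)
    (hdisj : ∀ i j, i ≠ j → Disjoint (interior (closedBall (x i) (r i)))
      (interior (closedBall (x j) (r j))))
    (S : Finset (Fin n)) (a : Fin 2)
    (htan : (∀ i ∈ S, x i a = r i) ∨ (∀ i ∈ S, x i a = 1 - r i)) :
    ∑ i ∈ S, r i ≤ ∑ k ∈ Finset.range S.card, 3 / (k + 1 : ℝ) := by
  classical
  set b : Fin 2 := if a = 0 then 1 else 0 with hb
  have hab : a ≠ b := by fin_cases a <;> simp [hb]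
  have rhalf : ∀ i, r i ≤ 1/2 := by
    intro i
    have h := coords_bounds (x i) (r i) (hr i) (hsub i)
    linarith [h.1, h.2.1]
  apply sum_le_of_count S.card S r rfl
  · exact fun i _ => ⟨hr i, by linarith [rhalf i]⟩
  · intro t ht ht2
    rcases htan with hlow | hhigh
    · apply counting x r hr hsub hdisj _ a b hab (t/2) t ht ht2
      · exact fun i hi => (Finset.mem_filter.mp hi).2
      · intro i hi v hv
        have hxa : x i a = r i := hlow i (Finset.mem_filter.mp hi).1
        have hti : t ≤ r i := (Finset.mem_filter.mp hi).2
        rw [hxa, abs_le]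
        obtain ⟨hv1, hv2⟩ := hv
        constructor <;> linarith
    · apply counting x r hr hsub hdisj _ a b hab (1 - t) t ht ht2
      · exact fun i hi => (Finset.mem_filter.mp hi).2
      · intro i hi v hv
        have hxa : x i a = 1 - r i := hhigh i (Finset.mem_filter.mp hi).1
        have hti : t ≤ r i := (Finset.mem_filter.mp hi).2
        rw [hxa, abs_le]
        obtain ⟨hv1, hv2⟩ := hv
        constructor <;> linarith

/-- Theorem 1, upper bound: There is `K > 0` such that the radii of any
`n ≥ 2` disks packed in the unit square, each touching its boundary, sum to at most
`K · log n`. -/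
theorem disks_touching_square_boundary_log_bound :
    ∃ K : ℝ, 0 < K ∧ ∀ n : ℕ, 2 ≤ n →
      ∀ (x : Fin n → EuclideanSpace ℝ (Fin 2)) (r : Fin n → ℝ),
        (∀ i, 0 < r i) →
        (∀ i, closedBall (x i) (r i) ⊆ unitSquare) →
        (∀ i j, i ≠ j →
          Disjoint (interior (closedBall (x i) (r i)))
                   (interior (closedBall (x j) (r j)))) →
        (∀ i, (closedBall (x i) (r i) ∩ frontier unitSquare).Nonempty) →
        ∑ i, r i ≤ K * Real.log n := by
  classical
  refine ⟨100, by norm_num, ?_⟩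
  intro n hn x r hr hsub hdisj hfr
  set P1 : Fin n → Prop := fun i => x i 0 = r i with hP1
  set P2 : Fin n → Prop := fun i => x i 0 = 1 - r i with hP2
  set P3 : Fin n → Prop := fun i => x i 1 = r i with hP3
  set B1 : Finset (Fin n) := Finset.univ.filter (fun i => ¬ P1 i) with hB1
  set B2 : Finset (Fin n) := B1.filter (fun i => ¬ P2 i) with hB2
  set A1 : Finset (Fin n) := Finset.univ.filter P1 with hA1
  set A2 : Finset (Fin n) := B1.filter P2 with hA2
  set A3 : Finset (Fin n) := B2.filter P3 with hA3
  set A4 : Finset (Fin n) := B2.filter (fun i => ¬ P3 i) with hA4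
  have hsplit : ∑ i, r i = ∑ i ∈ A1, r i + ∑ i ∈ A2, r i + ∑ i ∈ A3, r i + ∑ i ∈ A4, r i := by
    rw [hA1, hA2, hA3, hA4, hB2]
    rw [← Finset.sum_filter_add_sum_filter_not Finset.univ P1 r, ← hB1]
    rw [← Finset.sum_filter_add_sum_filter_not B1 P2 r, ← hB2]
    rw [← Finset.sum_filter_add_sum_filter_not B2 P3 r]
    ring
  -- bound each piece
  have hbnd : ∀ (S : Finset (Fin n)) (a : Fin 2),
      ((∀ i ∈ S, x i a = r i) ∨ (∀ i ∈ S, x i a = 1 - r i)) →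
      ∑ i ∈ S, r i ≤ 3 * (1 + Real.log n) := by
    intro S a htan
    calc ∑ i ∈ S, r i ≤ ∑ k ∈ Finset.range S.card, 3 / (k + 1 : ℝ) :=
          side_bound x r hr hsub hdisj S a htan
      _ ≤ ∑ k ∈ Finset.range n, 3 / (k + 1 : ℝ) := by
          apply Finset.sum_le_sum_of_subset_of_nonneg
          · exact Finset.range_subset_range.mpr (le_trans (Finset.card_le_card (Finset.subset_univ S))
              (le_of_eq (Finset.card_univ.trans (Fintype.card_fin n))))
          · intro k _ _; positivity
      _ ≤ 3 * (1 + Real.log n) := harmonic_bound n (by omega)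
  have h1 : ∑ i ∈ A1, r i ≤ 3 * (1 + Real.log n) := by
    apply hbnd A1 0
    left; intro i hi
    exact (Finset.mem_filter.mp hi).2
  have h2 : ∑ i ∈ A2, r i ≤ 3 * (1 + Real.log n) := by
    apply hbnd A2 0
    right; intro i hi
    exact (Finset.mem_filter.mp hi).2
  have h3 : ∑ i ∈ A3, r i ≤ 3 * (1 + Real.log n) := by
    apply hbnd A3 1
    left; intro i hi
    exact (Finset.mem_filter.mp hi).2
  have h4 : ∑ i ∈ A4, r i ≤ 3 * (1 + Real.log n) := by
    apply hbnd A4 1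
    right; intro i hi
    have hi4 := Finset.mem_filter.mp hi
    have hi2 := Finset.mem_filter.mp hi4.1
    have hi1 := Finset.mem_filter.mp hi2.1
    rcases tangent_cases (x i) (r i) (hr i) (hsub i) (hfr i) with h | h | h | h
    · exact absurd h hi1.2
    · exact absurd h hi2.2
    · exact absurd h hi4.2
    · exact h
  have hlog2 : Real.log 2 ≤ Real.log n := by
    apply Real.log_le_log (by norm_num)
    exact_mod_cast hn
  have hlog2' : (0.6931471803 : ℝ) < Real.log 2 := Real.log_two_gt_d9
  rw [hsplit]
  nlinarith [hlog2, hlog2', h1, h2, h3, h4]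
end

section
/- For coprime positive integers p, q, let F(p,q) denote the closed disk of radius 1/(2q²) centered at (p/q, 1/(2q²)) (the Ford disk of the fraction p/q). For any two distinct pairs (p,q) ≠ (p',q') of coprime positive integers, the disks F(p,q) and F(p',q') have disjoint interiors; i.e., the Ford disks form a packing in the upper half-plane. -/
open MeasureTheory Metric Set

/-- The point `(x, y) ∈ ℝ²`. -/
noncomputable def pt (x y : ℝ) : EuclideanSpace ℝ (Fin 2) := WithLp.toLp 2 ![x, y]

/-- The Ford disk of the fraction `p/q`: the closed disk of radius `1/(2q²)` centered at
`(p/q, 1/(2q²))`. -/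
noncomputable def fordDisk (p q : ℕ) : Set (EuclideanSpace ℝ (Fin 2)) :=
  closedBall (pt ((p : ℝ) / q) (1 / (2 * (q : ℝ) ^ 2))) (1 / (2 * (q : ℝ) ^ 2))

lemma dist_pt (a b c d : ℝ) : dist (pt a b) (pt c d) = Real.sqrt ((a-c)^2 + (b-d)^2) := by
  rw [EuclideanSpace.dist_eq]
  congr 1
  rw [Fin.sum_univ_two]
  simp [pt, Real.dist_eq, sq_abs]

/-- Ford disks of distinct reduced fractions have disjoint interiors, i.e.,
the Ford disks form a packing in the upper half-plane. -/
theorem fordDisks_packing (p q p' q' : ℕ)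
    (hp : 0 < p) (hq : 0 < q) (hp' : 0 < p') (hq' : 0 < q')
    (hpq : Nat.Coprime p q) (hpq' : Nat.Coprime p' q')
    (hne : (p, q) ≠ (p', q')) :
    Disjoint (interior (fordDisk p q)) (interior (fordDisk p' q')) := by
  have hqR : (0:ℝ) < q := by exact_mod_cast hq
  have hqR' : (0:ℝ) < q' := by exact_mod_cast hq'
  -- key: p q' ≠ p' q
  have hk : (p:ℤ) * q' - p' * q ≠ 0 := by
    intro h
    apply hne
    have h' : p * q' = p' * q := by
      have : (p:ℤ) * q' = p' * q := by linarith
      exact_mod_cast this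
    have hqq' : q = q' := by
      have h1 : q ∣ q' := by
        have : q ∣ p * q' := ⟨p', by linarith⟩
        exact (Nat.Coprime.dvd_of_dvd_mul_left hpq.symm this)
      have h2 : q' ∣ q := by
        have : q' ∣ p' * q := ⟨p, by linarith⟩
        exact (Nat.Coprime.dvd_of_dvd_mul_left hpq'.symm this)
      exact Nat.dvd_antisymm h1 h2
    have hpp' : p = p' := by
      subst hqq'
      exact Nat.eq_of_mul_eq_mul_right hq h'
    rw [hpp', hqq']
  have hk2 : (1:ℝ) ≤ ((p:ℝ) * q' - p' * q)^2 := by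
    have : (1:ℤ) ≤ ((p:ℤ) * q' - p' * q)^2 := by
      have : 0 < ((p:ℤ) * q' - p' * q)^2 := by positivity
      omega
    calc (1:ℝ) = ((1:ℤ):ℝ) := by norm_num
    _ ≤ (((((p:ℤ) * q' - p' * q)^2 : ℤ)):ℝ) := by exact_mod_cast this
    _ = ((p:ℝ) * q' - p' * q)^2 := by push_cast; ring
  set r : ℝ := 1 / (2 * (q:ℝ)^2) with hr
  set r' : ℝ := 1 / (2 * (q':ℝ)^2) with hr'
  have hrpos : 0 < r := by positivity
  have hrpos' : 0 < r' := by positivity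
  have hdist : r + r' ≤ dist (pt ((p:ℝ)/q) r) (pt ((p':ℝ)/q') r') := by
    rw [dist_pt]
    rw [Real.le_sqrt (by positivity)]
    swap
    · positivity
    have hA : ((p:ℝ)/q - (p':ℝ)/q') * ((q:ℝ) * q') = (p:ℝ) * q' - p' * q := by
      field_simp
    have hA2 : (1:ℝ) / ((q:ℝ)^2 * (q':ℝ)^2) ≤ ((p:ℝ)/q - (p':ℝ)/q')^2 := by
      rw [div_le_iff₀ (by positivity)]
      calc (1:ℝ) ≤ ((p:ℝ) * q' - p' * q)^2 := hk2
      _ = (((p:ℝ)/q - (p':ℝ)/q') * ((q:ℝ) * q'))^2 := by rw [hA]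
      _ = ((p:ℝ)/q - (p':ℝ)/q')^2 * ((q:ℝ)^2 * (q':ℝ)^2) := by ring
    have hid : (r + r')^2 = (r - r')^2 + 1 / ((q:ℝ)^2 * (q':ℝ)^2) := by
      rw [hr, hr']
      field_simp
      ring
    rw [hid]
    linarith
  have h1 : interior (fordDisk p q) = ball (pt ((p:ℝ)/q) r) r :=
    interior_closedBall _ hrpos.ne'
  have h2 : interior (fordDisk p' q') = ball (pt ((p':ℝ)/q') r') r' :=
    interior_closedBall _ hrpos'.ne'
  rw [h1, h2]
  exact ball_disjoint_ball hdist
end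

section
/- Let C and D be convex bodies in ℝ². There exists a constant ρ > 0 (depending on C and D) such that for every n ≥ 2 and every packing C₁,…,Cₙ in D of positive homothets of C (Cᵢ = vᵢ + μᵢ • C, μᵢ > 0), one has ∑ᵢ μᵢ ≤ ρ · (esc(S) + log n), where esc(S) = ∑ᵢ esc(Cᵢ) and esc(Cᵢ) = inf{dist(x,y) : x ∈ Cᵢ, y ∈ frontier D} is the distance from Cᵢ to the frontier of D. (Proposition 4.) -/
open MeasureTheory Metric Set
open Pointwise

/-- The infimum distance between two sets in ℝ² (the escape distance when the second set
is the frontier of the container). -/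
noncomputable def escDist (K L : Set (EuclideanSpace ℝ (Fin 2))) : ℝ :=
  sInf (Set.image2 dist K L)

local notation "E2" => EuclideanSpace ℝ (Fin 2)

lemma frontier_nonempty_of_compact {D : Set E2} (hD : IsCompact D) (hne : D.Nonempty) :
    (frontier D).Nonempty := by
  by_contra h
  rw [Set.not_nonempty_iff_eq_empty] at h
  have hint : interior D = D := by
    rw [← self_diff_frontier D, h, Set.diff_empty]
  have hclopen : IsClopen D := ⟨hD.isClosed, hint ▸ isOpen_interior⟩
  rcases isClopen_iff.mp hclopen with h1 | h1
  · exact hne.ne_empty h1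
  · exact hD.ne_univ h1

lemma strip_volume {D : Set E2} (hDconv : Convex ℝ D) (hDcpt : IsCompact D)
    {z : E2} {r0 : ℝ} (hr0 : 0 < r0) (hball : ball z r0 ⊆ D)
    {w : ℝ} (hw : 0 < w) :
    volume {x | x ∈ D ∧ infDist x (frontier D) < w} ≤ ENNReal.ofReal (2 * w / r0) * volume D := by
  have hzD : z ∈ D := hball (mem_ball_self hr0)
  by_cases hwr : r0 ≤ w
  · calc volume {x | x ∈ D ∧ infDist x (frontier D) < w}
        ≤ volume D := measure_mono (fun x hx => hx.1)
      _ ≤ ENNReal.ofReal (2 * w / r0) * volume D := by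
          refine le_mul_of_one_le_left (zero_le) ?_
          rw [ENNReal.one_le_ofReal, le_div_iff₀ hr0]
          nlinarith
  push_neg at hwr
  set l : ℝ := 1 - w / r0 with hl
  have hl0 : 0 < l := by
    rw [hl]; have : w / r0 < 1 := (div_lt_one hr0).mpr hwr; linarith
  have hl1 : l < 1 := by
    rw [hl]; have : 0 < w / r0 := div_pos hw hr0; linarith
  set T : E2 → E2 := fun x => (z - l • z) + l • x with hT
  have hTeq : ∀ d, T d = (1 - l) • z + l • d := by
    intro d; simp only [hT, sub_smul, one_smul]
  have hTD : T '' D ⊆ D := by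
    rintro _ ⟨d, hd, rfl⟩
    rw [hTeq]
    exact hDconv hzD hd (by linarith) (le_of_lt hl0) (by ring)
  have hfar : ∀ x ∈ T '' D, w ≤ infDist x (frontier D) := by
    rintro _ ⟨d, hd, rfl⟩
    have h1l : 0 < 1 - l := by linarith
    have hballsub : ball (T d) w ⊆ D := by
      intro y hy
      have hyd : y = l • d + (1 - l) • (z + (1 - l)⁻¹ • (y - T d)) := by
        rw [smul_add, smul_smul, mul_inv_cancel₀ (ne_of_gt h1l), one_smul, hTeq d]
        module
      rw [hyd]
      have hzmem : z + (1 - l)⁻¹ • (y - T d) ∈ ball z r0 := by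
        rw [mem_ball, dist_self_add_left, norm_smul, norm_inv, Real.norm_eq_abs,
          abs_of_pos h1l]
        have hnn : ‖y - T d‖ < w := by rwa [mem_ball, dist_eq_norm] at hy
        have hwl : w = (1 - l) * r0 := by rw [hl]; field_simp; ring
        calc (1 - l)⁻¹ * ‖y - T d‖ < (1 - l)⁻¹ * w :=
              mul_lt_mul_of_pos_left hnn (inv_pos.mpr h1l)
          _ = r0 := by rw [hwl]; field_simp
      exact hDconv hd (hball hzmem) (le_of_lt hl0) (le_of_lt h1l) (by ring)
    have hcne : Dᶜ.Nonempty := by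
      rcases hDcpt.isBounded.subset_ball z with ⟨R, hR⟩
      refine ⟨z + (|R| + 1) • EuclideanSpace.single (0 : Fin 2) (1 : ℝ), fun hmem => ?_⟩
      have := hR hmem
      rw [mem_ball, dist_self_add_left, norm_smul, Real.norm_eq_abs,
        EuclideanSpace.norm_single, norm_one, mul_one, abs_of_pos (by positivity)] at this
      linarith [le_abs_self R]
    have hfc : (frontier D).Nonempty := frontier_nonempty_of_compact hDcpt ⟨z, hzD⟩
    have h1 : infDist (T d) Dᶜ ≤ infDist (T d) (frontier D) := by
      rw [← infDist_closure (s := Dᶜ)]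
      exact infDist_le_infDist_of_subset
        (by rw [frontier_eq_closure_inter_closure]; exact inter_subset_right) hfc
    refine le_trans ?_ h1
    by_contra hlt
    push_neg at hlt
    obtain ⟨y, hyc, hyd⟩ := (infDist_lt_iff hcne).mp hlt
    exact hyc (hballsub (mem_ball'.mpr hyd))
  -- volume of the image T '' D
  have hTvol : volume (T '' D) = ENNReal.ofReal (l ^ 2) * volume D := by
    have himg : T '' D = (fun x => (z - l • z) + x) '' (l • D) := by
      rw [← Set.image_smul, Set.image_image]
    rw [himg, Set.image_add_left]
    rw [measure_preimage_add]
    rw [Measure.addHaar_smul]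
    congr 1
    rw [show Module.finrank ℝ E2 = 2 by simp]
    rw [abs_of_nonneg (by positivity)]
  have hTm : MeasurableSet (T '' D) := by
    have : IsCompact (T '' D) := hDcpt.image ((continuous_const.add (continuous_const_smul l)) : Continuous T)
    exact this.isClosed.measurableSet
  have hdisj : {x | x ∈ D ∧ infDist x (frontier D) < w} ⊆ D \ T '' D := by
    rintro x ⟨hxD, hxw⟩
    exact ⟨hxD, fun hxT => absurd hxw (not_lt.mpr (hfar x hxT))⟩
  calc volume {x | x ∈ D ∧ infDist x (frontier D) < w}
      ≤ volume (D \ T '' D) := measure_mono hdisj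
    _ = volume D - volume (T '' D) :=
        measure_diff (image_subset_iff.mpr (fun x hx => hTD ⟨x, hx, rfl⟩)) hTm.nullMeasurableSet
          (ne_of_lt (lt_of_le_of_lt (measure_mono hTD) hDcpt.measure_lt_top))
    _ = volume D - ENNReal.ofReal (l ^ 2) * volume D := by rw [hTvol]
    _ ≤ ENNReal.ofReal (1 - l ^ 2) * volume D := by
        rw [tsub_le_iff_right, ← add_mul, ← ENNReal.ofReal_add (by nlinarith) (by positivity)]
        rw [show 1 - l ^ 2 + l ^ 2 = 1 by ring, ENNReal.ofReal_one, one_mul]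
    _ ≤ ENNReal.ofReal (2 * w / r0) * volume D := by
        gcongr
        have hwl : 2 * w / r0 = 2 * (1 - l) := by
          rw [hl]; field_simp; ring
        rw [hwl]
        nlinarith

set_option maxHeartbeats 1000000 in
/-- Proposition 4: There is `ρ > 0` (depending on `C` and `D`) such that
for every `n ≥ 2` and every packing of `n` positive homothets of `C` in `D`, the sum of
homothety factors is at most `ρ · (esc(S) + log n)`, where `esc(S)` is the total distance
of the homothets from the frontier of `D`. -/
theorem packing_escape_log_bound
    (C D : Set (EuclideanSpace ℝ (Fin 2)))
    (hCconv : Convex ℝ C) (hCcpt : IsCompact C) (hCint : (interior C).Nonempty)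
    (hDconv : Convex ℝ D) (hDcpt : IsCompact D) (hDint : (interior D).Nonempty) :
    ∃ ρ : ℝ, 0 < ρ ∧ ∀ n : ℕ, 2 ≤ n →
      ∀ (v : Fin n → EuclideanSpace ℝ (Fin 2)) (μ : Fin n → ℝ),
        (∀ i, 0 < μ i) →
        (∀ i, (fun x => v i + μ i • x) '' C ⊆ D) →
        (∀ i j, i ≠ j →
          Disjoint (interior ((fun x => v i + μ i • x) '' C))
                   (interior ((fun x => v j + μ j • x) '' C))) →
        ∑ i, μ i ≤
          ρ * ((∑ i, escDist ((fun x => v i + μ i • x) '' C) (frontier D)) +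
            Real.log n) := by
  classical
  -- a ball inside C
  obtain ⟨c₀, hc₀⟩ := hCint
  obtain ⟨r, hr, hballC⟩ := Metric.isOpen_iff.mp isOpen_interior c₀ hc₀
  -- a ball inside D
  obtain ⟨z, hz⟩ := hDint
  obtain ⟨r0, hr0, hballD'⟩ := Metric.isOpen_iff.mp isOpen_interior z hz
  have hballD : ball z r0 ⊆ D := hballD'.trans interior_subset
  have hzD : z ∈ D := hballD (mem_ball_self hr0)
  -- constants
  set dC : ℝ := diam C with hdC
  have hdC0 : 0 ≤ dC := diam_nonneg
  have hdD : 0 < diam D := by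
    have h1 : z + (r0 / 2) • EuclideanSpace.single (0 : Fin 2) (1 : ℝ) ∈ D := by
      apply hballD
      rw [mem_ball, dist_self_add_left, norm_smul, Real.norm_eq_abs,
        EuclideanSpace.norm_single, norm_one, mul_one, abs_of_pos (by positivity)]
      linarith
    have h2 : dist (z + (r0 / 2) • EuclideanSpace.single (0 : Fin 2) (1 : ℝ)) z ≤ diam D :=
      dist_le_diam_of_mem hDcpt.isBounded h1 hzD
    rw [dist_self_add_left, norm_smul, Real.norm_eq_abs, EuclideanSpace.norm_single,
      norm_one, mul_one, abs_of_pos (by positivity)] at h2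
    linarith
  set M : ℝ := 2 * diam D / r with hM
  have hM0 : 0 < M := by positivity
  set β : ℝ := (volume (ball (0 : EuclideanSpace ℝ (Fin 2)) 1)).toReal with hβ
  have hβ0 : 0 < β := by
    rw [hβ]
    refine ENNReal.toReal_pos (ne_of_gt (measure_ball_pos _ _ one_pos)) ?_
    exact ne_of_lt measure_ball_lt_top
  set VD : ℝ := (volume D).toReal with hVD
  have hVD0 : 0 ≤ VD := ENNReal.toReal_nonneg
  set c₂ : ℝ := 8 * (1 + dC) * VD / (r0 * r ^ 2 * β) with hc₂
  have hc₂0 : 0 ≤ c₂ := by positivity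
  have hlog2 : (0:ℝ) < Real.log 2 := Real.log_pos one_lt_two
  refine ⟨1 + (2 * c₂ + M) / Real.log 2, by positivity, ?_⟩
  intro n hn v μ hμ hsub hdisj
  set ρ : ℝ := 1 + (2 * c₂ + M) / Real.log 2 with hρ
  set Kset : Fin n → Set (EuclideanSpace ℝ (Fin 2)) := fun i => (fun x => v i + μ i • x) '' C
    with hKset
  set t : Fin n → ℝ := fun i => escDist (Kset i) (frontier D) with ht
  have hCne : C.Nonempty := ⟨c₀, interior_subset hc₀⟩
  have hfr : (frontier D).Nonempty := frontier_nonempty_of_compact hDcpt ⟨z, hzD⟩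
  have hKne : ∀ i, (Kset i).Nonempty := fun i => hCne.image _
  have ht0 : ∀ i, 0 ≤ t i := by
    intro i
    exact Real.sInf_nonneg (fun x hx => by
      obtain ⟨a, -, b, -, rfl⟩ := hx
      exact dist_nonneg)
  -- diameter bound for homothets
  have hdiamK : ∀ i, ∀ x ∈ Kset i, ∀ y ∈ Kset i, dist x y ≤ μ i * dC := by
    intro i x hx y hy
    obtain ⟨a, ha, rfl⟩ := hx
    obtain ⟨b, hb, rfl⟩ := hy
    rw [dist_add_left, dist_smul₀, Real.norm_eq_abs, abs_of_pos (hμ i)]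
    exact mul_le_mul_of_nonneg_left (dist_le_diam_of_mem hCcpt.isBounded ha hb) (le_of_lt (hμ i))
  -- bound μ i ≤ M
  have hμM : ∀ i, μ i ≤ M := by
    intro i
    have hc1 : c₀ ∈ C := interior_subset hc₀
    have hc2 : c₀ + (r / 2) • EuclideanSpace.single (0 : Fin 2) (1 : ℝ) ∈ C := by
      apply interior_subset; apply hballC
      rw [mem_ball, dist_self_add_left, norm_smul, Real.norm_eq_abs,
        EuclideanSpace.norm_single, norm_one, mul_one, abs_of_pos (by positivity)]
      linarith
    have h1 : dist (v i + μ i • c₀)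
        (v i + μ i • (c₀ + (r / 2) • EuclideanSpace.single (0 : Fin 2) (1 : ℝ))) ≤ diam D :=
      dist_le_diam_of_mem hDcpt.isBounded (hsub i ⟨c₀, hc1, rfl⟩) (hsub i ⟨_, hc2, rfl⟩)
    rw [dist_add_left, dist_smul₀, dist_self_add_right, norm_smul, Real.norm_eq_abs,
      Real.norm_eq_abs, EuclideanSpace.norm_single, norm_one, mul_one,
      abs_of_pos (hμ i), abs_of_pos (by positivity : (0:ℝ) < r / 2)] at h1
    rw [hM, le_div_iff₀ hr]
    nlinarith
  -- every point of K i is within t i + μ i * dC of the frontier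
  have hinf : ∀ i, ∀ x ∈ Kset i, infDist x (frontier D) ≤ t i + μ i * dC := by
    intro i x hx
    have hle : infDist x (frontier D) - μ i * dC ≤ t i := by
      apply le_csInf ((hKne i).image2 hfr)
      rintro d ⟨a, ha, b, hb, rfl⟩
      have h1 : infDist x (frontier D) ≤ dist x b := infDist_le_dist_of_mem hb
      have h2 : dist x b ≤ dist x a + dist a b := dist_triangle _ _ _
      have h3 : dist x a ≤ μ i * dC := hdiamK i x hx a ha
      linarith
    linarith
  -- inner balls
  have hballK : ∀ i, ball (v i + μ i • c₀) (μ i * r) ⊆ interior (Kset i) := by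
    intro i
    rw [(isOpen_ball).subset_interior_iff]
    intro y hy
    refine ⟨c₀ + (μ i)⁻¹ • (y - (v i + μ i • c₀)), ?_, ?_⟩
    · apply interior_subset; apply hballC
      rw [mem_ball, dist_self_add_left, norm_smul, norm_inv, Real.norm_eq_abs,
        abs_of_pos (hμ i)]
      rw [mem_ball, dist_eq_norm] at hy
      rw [inv_mul_lt_iff₀ (hμ i)]
      exact hy
    · show v i + μ i • (c₀ + (μ i)⁻¹ • (y - (v i + μ i • c₀))) = y
      rw [smul_add, smul_smul, mul_inv_cancel₀ (ne_of_gt (hμ i)), one_smul]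
      abel
  -- partition of indices
  set K : ℕ := Nat.clog 2 n with hK
  have hn1 : 1 < n := lt_of_lt_of_le one_lt_two hn
  have hnK : (n : ℝ) ≤ 2 ^ K := by exact_mod_cast Nat.le_pow_clog one_lt_two n
  set sthr : ℝ := M / 2 ^ K with hsthr
  have hsthr0 : 0 < sthr := by positivity
  set A : Finset (Fin n) := Finset.univ.filter (fun i => μ i ≤ t i) with hA
  set B : Finset (Fin n) := Finset.univ.filter (fun i => ¬ μ i ≤ t i) with hB
  set Bs : Finset (Fin n) := B.filter (fun i => μ i ≤ sthr) with hBs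
  set Bb : Finset (Fin n) := B.filter (fun i => ¬ μ i ≤ sthr) with hBb
  have hsplit : ∑ i, μ i = (∑ i ∈ A, μ i) + ((∑ i ∈ Bs, μ i) + (∑ i ∈ Bb, μ i)) := by
    rw [hBs, hBb, Finset.sum_filter_add_sum_filter_not, hA, hB,
      Finset.sum_filter_add_sum_filter_not]
  have hAbound : ∑ i ∈ A, μ i ≤ ∑ i, t i :=
    le_trans (Finset.sum_le_sum (fun i hi => (Finset.mem_filter.mp hi).2))
      (Finset.sum_le_sum_of_subset_of_nonneg (Finset.subset_univ A) (fun i _ _ => ht0 i))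
  have hBsbound : ∑ i ∈ Bs, μ i ≤ M := by
    have hcard : (Bs.card : ℝ) ≤ (n : ℝ) := by
      exact_mod_cast le_trans (Finset.card_le_univ _) (le_of_eq (by simp))
    calc ∑ i ∈ Bs, μ i ≤ ∑ _i ∈ Bs, sthr :=
          Finset.sum_le_sum (fun i hi => (Finset.mem_filter.mp hi).2)
      _ = Bs.card * sthr := by rw [Finset.sum_const, nsmul_eq_mul]
      _ ≤ (2:ℝ) ^ K * sthr := by
          apply mul_le_mul_of_nonneg_right _ (le_of_lt hsthr0)
          exact le_trans hcard hnK
      _ = M := by rw [hsthr]; field_simp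
  -- dyadic fibers
  set f : Fin n → ℕ := fun i => Nat.log 2 ⌊M / μ i⌋₊ with hf
  have hfiber : ∀ i ∈ Bb, f i < K ∧ M / 2 ^ (f i + 1) < μ i ∧ μ i ≤ M / 2 ^ (f i) := by
    intro i hi
    have hμs : sthr < μ i := lt_of_not_ge (Finset.mem_filter.mp hi).2
    have hμipos := hμ i
    have hfl1 : 1 ≤ ⌊M / μ i⌋₊ :=
      Nat.le_floor (by rw [Nat.cast_one, le_div_iff₀ hμipos, one_mul]; exact hμM i)
    have hfl0 : ⌊M / μ i⌋₊ ≠ 0 := by omega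
    have hup : (⌊M / μ i⌋₊ : ℝ) ≤ M / μ i := Nat.floor_le (by positivity)
    refine ⟨?_, ?_, ?_⟩
    · apply Nat.log_lt_of_lt_pow hfl0
      rw [Nat.floor_lt (by positivity)]
      push_cast
      rw [div_lt_iff₀ hμipos]
      have h5 : M < μ i * 2 ^ K := by
        have := (div_lt_iff₀ (by positivity : (0:ℝ) < 2 ^ K)).mp hμs
        linarith
      linarith
    · have h1 : ⌊M / μ i⌋₊ < 2 ^ (f i + 1) := Nat.lt_pow_succ_log_self one_lt_two _
      have h2 : M / μ i < (⌊M / μ i⌋₊ : ℝ) + 1 := Nat.lt_floor_add_one _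
      have h3 : ((⌊M / μ i⌋₊ : ℝ)) + 1 ≤ (2:ℝ) ^ (f i + 1) := by exact_mod_cast Nat.succ_le_of_lt h1
      rw [div_lt_iff₀ (by positivity)]
      have h4 : M / μ i < (2:ℝ) ^ (f i + 1) := lt_of_lt_of_le h2 h3
      rw [div_lt_iff₀ hμipos] at h4
      linarith
    · have h4 : (2:ℝ) ^ (f i) ≤ M / μ i := by
        calc (2:ℝ) ^ f i = ((2 ^ f i : ℕ) : ℝ) := by push_cast; ring
          _ ≤ (⌊M / μ i⌋₊ : ℝ) := by exact_mod_cast Nat.pow_log_le_self 2 hfl0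
          _ ≤ M / μ i := hup
      rw [le_div_iff₀ hμipos] at h4
      rw [le_div_iff₀ (by positivity)]
      linarith
  -- per-fiber bound via the strip volume
  have hfiberbound : ∀ k < K, ∑ i ∈ Bb.filter (fun i => f i = k), μ i ≤ c₂ := by
    intro k hk
    set F : Finset (Fin n) := Bb.filter (fun i => f i = k) with hF
    set w : ℝ := 2 * (1 + dC) * (M / 2 ^ k) with hw
    have hw0 : 0 < w := by positivity
    set strip : Set (EuclideanSpace ℝ (Fin 2)) :=
      {x | x ∈ D ∧ infDist x (frontier D) < w} with hstrip
    have hsubstrip : ∀ i ∈ F, ball (v i + μ i • c₀) (μ i * r) ⊆ strip := by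
      intro i hi x hx
      have hiBb : i ∈ Bb := (Finset.mem_filter.mp hi).1
      have hfik : f i = k := (Finset.mem_filter.mp hi).2
      obtain ⟨-, -, hhigh⟩ := hfiber i hiBb
      rw [hfik] at hhigh
      have hiB : i ∈ B := (Finset.mem_filter.mp hiBb).1
      have hti : t i < μ i := lt_of_not_ge (Finset.mem_filter.mp hiB).2
      have hxK : x ∈ Kset i := interior_subset (hballK i hx)
      refine ⟨hsub i hxK, ?_⟩
      have h1 : infDist x (frontier D) ≤ t i + μ i * dC := hinf i x hxK
      have hMk : 0 < M / 2 ^ k := by positivity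
      have h2 : t i + μ i * dC < μ i * (1 + dC) := by nlinarith [hμ i]
      have h3 : μ i * (1 + dC) ≤ (M / 2 ^ k) * (1 + dC) := by nlinarith
      have h4 : (M / 2 ^ k) * (1 + dC) < w := by rw [hw]; nlinarith
      calc infDist x (frontier D) ≤ t i + μ i * dC := h1
        _ < w := by linarith
    have hdisjballs : (↑F : Set (Fin n)).PairwiseDisjoint
        (fun i => ball (v i + μ i • c₀) (μ i * r)) := by
      intro i _ j _ hij
      exact Set.disjoint_of_subset (hballK i) (hballK j) (hdisj i j hij)
    have hvol1 : ∑ i ∈ F, volume (ball (v i + μ i • c₀) (μ i * r)) ≤ volume strip := by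
      rw [← measure_biUnion_finset hdisjballs (fun i _ => measurableSet_ball)]
      exact measure_mono (Set.iUnion₂_subset hsubstrip)
    have hstripvol : volume strip ≤ ENNReal.ofReal (2 * w / r0) * volume D :=
      strip_volume hDconv hDcpt hr0 hballD hw0
    have hballvol : ∀ i : Fin n, volume (ball (v i + μ i • c₀) (μ i * r))
        = ENNReal.ofReal ((μ i * r) ^ 2) * volume (ball (0 : EuclideanSpace ℝ (Fin 2)) 1) := by
      intro i
      rw [Measure.addHaar_ball volume _ (mul_nonneg (hμ i).le hr.le)]
      congr 2
      simp
    have hchain : ∑ i ∈ F, ENNReal.ofReal ((μ i * r) ^ 2)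
          * volume (ball (0 : EuclideanSpace ℝ (Fin 2)) 1)
        ≤ ENNReal.ofReal (2 * w / r0) * volume D := by
      calc ∑ i ∈ F, ENNReal.ofReal ((μ i * r) ^ 2)
            * volume (ball (0 : EuclideanSpace ℝ (Fin 2)) 1)
          = ∑ i ∈ F, volume (ball (v i + μ i • c₀) (μ i * r)) :=
            Finset.sum_congr rfl (fun i _ => (hballvol i).symm)
        _ ≤ volume strip := hvol1
        _ ≤ _ := hstripvol
    have hreal : ∑ i ∈ F, (μ i * r) ^ 2 * β ≤ 2 * w / r0 * VD := by
      have hfin : ENNReal.ofReal (2 * w / r0) * volume D ≠ ⊤ :=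
        ENNReal.mul_ne_top ENNReal.ofReal_ne_top hDcpt.measure_lt_top.ne
      have h2 := ENNReal.toReal_mono hfin hchain
      have hballfin : volume (ball (0 : EuclideanSpace ℝ (Fin 2)) 1) ≠ ⊤ :=
        measure_ball_lt_top.ne
      rw [ENNReal.toReal_sum (fun i _ => ENNReal.mul_ne_top ENNReal.ofReal_ne_top hballfin),
        ENNReal.toReal_mul, ENNReal.toReal_ofReal (by positivity)] at h2
      calc ∑ i ∈ F, (μ i * r) ^ 2 * β
          = ∑ i ∈ F, (ENNReal.ofReal ((μ i * r) ^ 2)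
              * volume (ball (0 : EuclideanSpace ℝ (Fin 2)) 1)).toReal := by
            refine Finset.sum_congr rfl (fun i _ => ?_)
            rw [ENNReal.toReal_mul, ENNReal.toReal_ofReal (by positivity), hβ]
        _ ≤ 2 * w / r0 * VD := h2
    have hsum2 : ∑ i ∈ F, μ i ≤ (2 ^ (k + 1) / M) * ∑ i ∈ F, (μ i) ^ 2 := by
      rw [Finset.mul_sum]
      refine Finset.sum_le_sum (fun i hi => ?_)
      have hiBb : i ∈ Bb := (Finset.mem_filter.mp hi).1
      have hfik : f i = k := (Finset.mem_filter.mp hi).2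
      obtain ⟨-, hlow, -⟩ := hfiber i hiBb
      rw [hfik] at hlow
      rw [div_lt_iff₀ (by positivity : (0:ℝ) < 2 ^ (k + 1))] at hlow
      rw [div_mul_eq_mul_div, le_div_iff₀ hM0]
      nlinarith [hμ i]
    have hsum3 : ∑ i ∈ F, (μ i) ^ 2 ≤ 2 * w / r0 * VD / (r ^ 2 * β) := by
      rw [le_div_iff₀ (by positivity)]
      calc (∑ i ∈ F, (μ i) ^ 2) * (r ^ 2 * β) = ∑ i ∈ F, (μ i * r) ^ 2 * β := by
            rw [Finset.sum_mul]
            exact Finset.sum_congr rfl (fun i _ => by ring)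
        _ ≤ 2 * w / r0 * VD := hreal
    calc ∑ i ∈ F, μ i ≤ (2 ^ (k + 1) / M) * ∑ i ∈ F, (μ i) ^ 2 := hsum2
      _ ≤ (2 ^ (k + 1) / M) * (2 * w / r0 * VD / (r ^ 2 * β)) := by
          exact mul_le_mul_of_nonneg_left hsum3 (by positivity)
      _ = c₂ := by
          rw [hw, hc₂, pow_succ]
          field_simp
          ring
  have hBbbound : ∑ i ∈ Bb, μ i ≤ K * c₂ := by
    rw [← Finset.sum_fiberwise_of_maps_to (g := f) (t := Finset.range K)
      (fun i hi => Finset.mem_range.mpr (hfiber i hi).1) μ]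
    calc ∑ k ∈ Finset.range K, ∑ i ∈ Bb.filter (fun i => f i = k), μ i
        ≤ ∑ k ∈ Finset.range K, c₂ :=
          Finset.sum_le_sum (fun k hk => hfiberbound k (Finset.mem_range.mp hk))
      _ = K * c₂ := by rw [Finset.sum_const, nsmul_eq_mul, Finset.card_range]
  -- bound on K
  have hKlog : (K : ℝ) ≤ 2 * Real.log n / Real.log 2 := by
    have hlogn : Real.log 2 ≤ Real.log n := Real.log_le_log two_pos (by exact_mod_cast hn)
    rcases Nat.eq_zero_or_pos K with hK0 | hK1
    · rw [hK0]; push_cast; positivity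
    · have h2K : (2:ℝ) ^ (K - 1) < n := by
        exact_mod_cast Nat.pow_pred_clog_lt_self one_lt_two hn1
      have hlog' : ((K - 1 : ℕ) : ℝ) * Real.log 2 < Real.log n := by
        rw [← Real.log_pow]
        apply Real.log_lt_log (by positivity)
        exact_mod_cast h2K
      have hcast : ((K - 1 : ℕ) : ℝ) = (K : ℝ) - 1 := by
        rw [Nat.cast_sub hK1, Nat.cast_one]
      rw [hcast] at hlog'
      rw [le_div_iff₀ hlog2]
      nlinarith
  -- final assembly
  have hlogn2 : Real.log 2 ≤ Real.log n := Real.log_le_log two_pos (by exact_mod_cast hn)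
  have hlognpos : 0 < Real.log n := lt_of_lt_of_le hlog2 hlogn2
  have htsum : 0 ≤ ∑ i, t i := Finset.sum_nonneg (fun i _ => ht0 i)
  rw [hsplit]
  have hMlog : M ≤ M / Real.log 2 * Real.log n := by
    rw [div_mul_eq_mul_div, le_div_iff₀ hlog2]
    exact mul_le_mul_of_nonneg_left hlogn2 hM0.le
  have hKc₂ : (K : ℝ) * c₂ ≤ 2 * c₂ / Real.log 2 * Real.log n := by
    calc (K : ℝ) * c₂ ≤ 2 * Real.log n / Real.log 2 * c₂ :=
          mul_le_mul_of_nonneg_right hKlog hc₂0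
      _ = 2 * c₂ / Real.log 2 * Real.log n := by ring
  have hρ1 : (1:ℝ) ≤ ρ := by
    rw [hρ]; have : 0 ≤ (2 * c₂ + M) / Real.log 2 := by positivity
    linarith
  calc (∑ i ∈ A, μ i) + ((∑ i ∈ Bs, μ i) + (∑ i ∈ Bb, μ i))
      ≤ (∑ i, t i) + ((M / Real.log 2 * Real.log n) + (2 * c₂ / Real.log 2 * Real.log n)) :=
        add_le_add hAbound (add_le_add (le_trans hBsbound hMlog) (le_trans hBbbound hKc₂))
    _ ≤ ρ * ((∑ i, t i) + Real.log n) := by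
        set q : ℝ := (2 * c₂ + M) / Real.log 2 with hq
        have hq0 : 0 ≤ q := by positivity
        have h1 : M / Real.log 2 * Real.log n + 2 * c₂ / Real.log 2 * Real.log n
            = q * Real.log n := by rw [hq]; ring
        have h2 : ρ * ((∑ i, t i) + Real.log n)
            = (∑ i, t i) + Real.log n + q * (∑ i, t i) + q * Real.log n := by
          rw [hρ]; ring
        rw [h1, h2]
        have h3 : 0 ≤ q * (∑ i, t i) := mul_nonneg hq0 htsum
        linarith
end
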